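/- For r ≥ 1 and s/m ≤ 1/2 with 0 < s < m, the function x ↦ q_{r,x}^s (1 - q_{r,x})^{m-s} on [0, 1/2], where q_{r,x} = (1-(1-2x)^r)/2, attains its maximum at x = 1/2 - (1/2)(1 - 2s/m)^{1/r}. -/

import Mathlib

/-- The classical inequality: for `q ∈ [0,1]`, `q^s (1-q)^(m-s) ≤ (s/m)^s ((m-s)/m)^(m-s)`. -/
lemma ml_key (s m : ℕ) (hs0 : 0 < s) (hsm : s < m) (q : ℝ) (hq0 : 0 ≤ q) (hq1 : q ≤ 1) :
    q ^ s * (1 - q) ^ (m - s) ≤ ((s : ℝ) / m) ^ s * (((m : ℝ) - s) / m) ^ (m - s) := by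
  have hsR : (0:ℝ) < s := by exact_mod_cast hs0
  have hm : (0:ℝ) < m := by exact_mod_cast hs0.trans hsm
  have hmsR : (0:ℝ) < (m:ℝ) - s := by
    have : (s:ℝ) < m := by exact_mod_cast hsm
    linarith
  have hRHS : 0 ≤ ((s : ℝ) / m) ^ s * (((m : ℝ) - s) / m) ^ (m - s) := by positivity
  rcases eq_or_lt_of_le hq0 with h0 | h0
  · rw [← h0, zero_pow hs0.ne', zero_mul]; exact hRHS
  rcases eq_or_lt_of_le hq1 with h1 | h1
  · rw [h1, sub_self, zero_pow (Nat.sub_ne_zero_of_lt hsm), mul_zero]; exact hRHS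
  have hq1' : 0 < 1 - q := by linarith
  set p₁ : ℝ := q * m / s with hp₁def
  set p₂ : ℝ := (1 - q) * m / ((m:ℝ) - s) with hp₂def
  have hp₁ : 0 < p₁ := by positivity
  have hp₂ : 0 < p₂ := by positivity
  have hw : (s:ℝ)/m + ((m:ℝ)-s)/m = 1 := by field_simp; ring
  have hgm : p₁ ^ ((s:ℝ)/m) * p₂ ^ (((m:ℝ)-s)/m) ≤ (s:ℝ)/m * p₁ + ((m:ℝ)-s)/m * p₂ :=
    Real.geom_mean_le_arith_mean2_weighted (by positivity) (by positivity) hp₁.le hp₂.le hw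
  have harith : (s:ℝ)/m * p₁ + ((m:ℝ)-s)/m * p₂ = 1 := by
    rw [hp₁def, hp₂def]; field_simp; ring
  rw [harith] at hgm
  have hpow : (p₁ ^ ((s:ℝ)/m) * p₂ ^ (((m:ℝ)-s)/m)) ^ m ≤ 1 := by
    calc (p₁ ^ ((s:ℝ)/m) * p₂ ^ (((m:ℝ)-s)/m)) ^ m ≤ 1 ^ m :=
          pow_le_pow_left₀ (by positivity) hgm m
      _ = 1 := one_pow m
  have hexp : (p₁ ^ ((s:ℝ)/m) * p₂ ^ (((m:ℝ)-s)/m)) ^ m = p₁ ^ s * p₂ ^ (m - s) := by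
    rw [mul_pow, ← Real.rpow_natCast (p₁ ^ ((s:ℝ)/m)) m, ← Real.rpow_natCast (p₂ ^ (((m:ℝ)-s)/m)) m,
      ← Real.rpow_mul hp₁.le, ← Real.rpow_mul hp₂.le]
    have e1 : (s:ℝ)/m * m = (s:ℕ) := by field_simp
    have e2 : ((m:ℝ)-s)/m * m = ((m - s : ℕ) : ℝ) := by
      rw [Nat.cast_sub hsm.le]; field_simp
    rw [e1, e2, Real.rpow_natCast, Real.rpow_natCast]
  rw [hexp] at hpow
  have key : q ^ s * (1 - q) ^ (m - s)
      = (p₁ ^ s * p₂ ^ (m - s)) * (((s : ℝ) / m) ^ s * (((m : ℝ) - s) / m) ^ (m - s)) := by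
    have e1 : p₁ * ((s:ℝ)/m) = q := by rw [hp₁def]; field_simp
    have e2 : p₂ * (((m:ℝ)-s)/m) = 1 - q := by rw [hp₂def]; field_simp
    calc q ^ s * (1 - q) ^ (m - s)
        = (p₁ * ((s:ℝ)/m)) ^ s * (p₂ * (((m:ℝ)-s)/m)) ^ (m - s) := by rw [e1, e2]
      _ = _ := by rw [mul_pow, mul_pow]; ring
  rw [key]
  exact mul_le_of_le_one_left hRHS hpow

theorem ml_estimate_interior (r m s : ℕ) (hr : 1 ≤ r) (hs0 : 0 < s) (hsm : s < m)
    (hhalf : (s : ℝ) / m ≤ 1 / 2) :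
    (1 / 2 - (1 / 2) * (1 - 2 * (s : ℝ) / m) ^ ((1 : ℝ) / r) ∈ Set.Icc (0:ℝ) (1 / 2)) ∧
    IsMaxOn
      (fun x : ℝ => ((1 - (1 - 2 * x) ^ r) / 2) ^ s * (1 - (1 - (1 - 2 * x) ^ r) / 2) ^ (m - s))
      (Set.Icc 0 (1 / 2))
      (1 / 2 - (1 / 2) * (1 - 2 * (s : ℝ) / m) ^ ((1 : ℝ) / r)) := by
  have hsR : (0:ℝ) < s := by exact_mod_cast hs0
  have hm : (0:ℝ) < m := by exact_mod_cast hs0.trans hsm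
  set a : ℝ := 1 - 2 * (s : ℝ) / m with ha
  have ha0 : 0 ≤ a := by
    have : 2 * ((s:ℝ)/m) ≤ 1 := by linarith
    rw [ha]; rw [mul_div_assoc]; linarith
  have ha1 : a ≤ 1 := by
    have : 0 ≤ (s:ℝ)/m := by positivity
    rw [ha, mul_div_assoc]; linarith
  set b : ℝ := a ^ ((1:ℝ)/r) with hb
  have hb0 : 0 ≤ b := Real.rpow_nonneg ha0 _
  have hb1 : b ≤ 1 := Real.rpow_le_one ha0 ha1 (by positivity)
  set x₀ : ℝ := 1 / 2 - (1 / 2) * b with hx₀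
  have hmem : x₀ ∈ Set.Icc (0:ℝ) (1/2) := by
    constructor
    · rw [hx₀]; nlinarith
    · rw [hx₀]; nlinarith
  refine ⟨hmem, ?_⟩
  have hbr : b ^ r = a := by
    rw [hb, ← Real.rpow_natCast (a ^ ((1:ℝ)/r)) r, ← Real.rpow_mul ha0]
    have : (1:ℝ)/r * r = 1 := by
      field_simp
    rw [this, Real.rpow_one]
  have h2x₀ : 1 - 2 * x₀ = b := by rw [hx₀]; ring
  have hq₀ : (1 - (1 - 2 * x₀) ^ r) / 2 = (s:ℝ)/m := by
    rw [h2x₀, hbr, ha]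
    field_simp
    ring
  have hfx₀ : ((1 - (1 - 2 * x₀) ^ r) / 2) ^ s * (1 - (1 - (1 - 2 * x₀) ^ r) / 2) ^ (m - s)
      = ((s:ℝ)/m) ^ s * (((m:ℝ)-s)/m) ^ (m - s) := by
    rw [hq₀]
    congr 2
    field_simp
  rw [isMaxOn_iff]
  intro y hy
  show ((1 - (1 - 2*y)^r)/2)^s * (1 - (1-(1-2*y)^r)/2)^(m-s)
      ≤ ((1 - (1 - 2*x₀)^r)/2)^s * (1 - (1-(1-2*x₀)^r)/2)^(m-s)
  rw [hfx₀]
  set t : ℝ := (1 - 2 * y) ^ r with ht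
  have hy0 := hy.1
  have hy1 := hy.2
  have ht0 : 0 ≤ t := by
    rw [ht]; apply pow_nonneg; linarith
  have ht1 : t ≤ 1 := by
    rw [ht]; apply pow_le_one₀ (by linarith) (by linarith)
  have hq0 : 0 ≤ (1 - t) / 2 := by linarith
  have hq1 : (1 - t) / 2 ≤ 1 := by linarith
  have := ml_key s m hs0 hsm ((1 - t)/2) hq0 hq1
  have hre : 1 - (1 - t) / 2 = 1 - (1 - t)/2 := rfl
  linarith [this]
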